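/- Let s ∈ ℂ and let A = (A_{r,j})_{(r,j)∈𝓘} be complex numbers. Suppose {f_{m,k}} and {f̃_{m,k}} are two scalar formal solutions of the N-th order equation Π_r (d/dt − i m_r)^{n_r} y = ε V(ε, e^{±it}, y, y′, …, y^{(N−1)}) such that (ii) their ε⁰ parts equal the unperturbed solution, i.e. f_{m,0} = f̃_{m,0} = Σ_r δ_{m,m_r} h_r(t, A_r) with h_r(t,A_r) = Σ_{j=1}^{n_r} A_{r,j} t^{j−1}/(j−1)!, and (iii) for every (r,j) ∈ 𝓘 and every k ≥ 0, (d^{j−1}/dt^{j−1} f_{m_r,k})(s) = (d^{j−1}/dt^{j−1} f̃_{m_r,k})(s). Then the two formal solutions coincide: f_{m,k} = f̃_{m,k} for all m, k. -/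

import Mathlib

noncomputable section

open Polynomial

/-- Finite `ℂ[t]`-linear combinations of Fourier modes `e^{i m t}` (`m : ℤ`):
the mode-`m` coefficient of `x` is the polynomial `x m`. -/
abbrev FourierPoly : Type := AddMonoidAlgebra (Polynomial ℂ) ℤ

/-- Formal power series in `ε` whose coefficients are finite Fourier sums with
polynomial-in-`t` coefficients. -/
abbrev FSeries : Type := PowerSeries FourierPoly

/-- The mode `e^{i t}`, as a unit of `FSeries` (inverse `e^{-i t}`). -/
def zUnit : FSeriesˣ where
  val := PowerSeries.C (AddMonoidAlgebra.single 1 1)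
  inv := PowerSeries.C (AddMonoidAlgebra.single (-1) 1)
  val_inv := by
    rw [← map_mul, AddMonoidAlgebra.single_mul_single]
    norm_num [AddMonoidAlgebra.one_def]
  inv_val := by
    rw [← map_mul, AddMonoidAlgebra.single_mul_single]
    norm_num [AddMonoidAlgebra.one_def]

/-- Evaluation of a Laurent polynomial in `z` (an element of `ℂ[z,z⁻¹] = AddMonoidAlgebra ℂ ℤ`)
at `z = e^{i t}`, landing in `FSeries`. -/
def zEval : AddMonoidAlgebra ℂ ℤ →+* FSeries :=
  AddMonoidAlgebra.liftNCRingHom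
    (PowerSeries.C.comp (AddMonoidAlgebra.singleZeroRingHom.comp (Polynomial.C : ℂ →+* Polynomial ℂ)))
    ((Units.coeHom _).comp (zpowersHom _ zUnit))
    (fun _ _ => Commute.all _ _)

/-- Evaluation of `V ∈ ℂ[ε, z, z⁻¹, y₁, …, yₙ]` (encoded as a polynomial in the `y`-variables
with coefficients in `ℂ[z,z⁻¹][ε]`) at `z = e^{i t}`, `ε = ε` (the power series variable)
and given formal series values of the `y`-variables. -/
def VEval {n : ℕ} (V : MvPolynomial (Fin n) (Polynomial (AddMonoidAlgebra ℂ ℤ)))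
    (y : Fin n → FSeries) : FSeries :=
  MvPolynomial.eval₂ (Polynomial.eval₂RingHom zEval PowerSeries.X) y V

/-- The mode-by-mode derivative `d/dt` on finite Fourier sums:
`p(t) e^{imt} ↦ (p'(t) + i m p(t)) e^{imt}`. -/
def modeDeriv (x : FourierPoly) : FourierPoly :=
  Finsupp.sum x.coeff fun m p =>
    AddMonoidAlgebra.single m (derivative p + Polynomial.C (Complex.I * (m : ℂ)) * p)

/-- The derivative `d/dt`, acting coefficientwise in `ε` on `FSeries`. -/
def seriesDeriv (y : FSeries) : FSeries :=
  PowerSeries.mk fun k => modeDeriv (PowerSeries.coeff k y)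

/-- The operator `d/dt + c` on `ℂ[t]`. -/
def shiftedDeriv (c : ℂ) : Module.End ℂ (Polynomial ℂ) :=
  (Polynomial.derivative : Polynomial ℂ →ₗ[ℂ] Polynomial ℂ) + c • 1

/-- The operator `Π_{r=1}^{d} (d/dt + i(m - m_r))^{n_r}` on `ℂ[t]`. -/
def opProd {d : ℕ} (mr : Fin d → ℤ) (nv : Fin d → ℕ) (m : ℤ) :
    Module.End ℂ (Polynomial ℂ) :=
  (List.ofFn fun r : Fin d => shiftedDeriv (Complex.I * ((m : ℂ) - (mr r : ℂ))) ^ nv r).prod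

/-- `F` encodes a scalar formal solution `y(ε,t) = Σ_k ε^k Σ_m f_{m,k}(t) e^{imt}` of the
`N`-th order equation `Π_r (d/dt - i m_r)^{n_r} y = ε V(ε, e^{±it}, y, y', …, y^{(N-1)})`
(`N = n_1 + ⋯ + n_d`): order by order in `ε` and mode by mode in `e^{imt}`,
`Π_r (d/dt + i(m - m_r))^{n_r} f_{m,k} = [ε V(ε, e^{±it}, y, y', …, y^{(N-1)})]_{ε^k e^{imt}}`.
(Finiteness of the support in `m` at each order is built into `FourierPoly`.) -/
def IsScalarFormalSolution {d : ℕ} (mr : Fin d → ℤ) (nv : Fin d → ℕ)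
    (V : MvPolynomial (Fin (∑ r, nv r)) (Polynomial (AddMonoidAlgebra ℂ ℤ)))
    (F : ℕ → FourierPoly) : Prop :=
  ∀ (k : ℕ) (m : ℤ),
    opProd mr nv m ((F k).coeff m)
      = (PowerSeries.coeff k (PowerSeries.X *
          VEval V (fun l => seriesDeriv^[(l : ℕ)] (PowerSeries.mk fun k' => F k')))).coeff m

/-- `h_r(t, A_r) = Σ_{j=1}^{n_r} A_{r,j} t^{j-1}/(j-1)!` (here `0`-indexed:
`h_r = Σ_{j : Fin (n_r)} A_{r,j} t^j / j!`). -/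
def hPoly {d : ℕ} (nv : Fin d → ℕ) (A : (r : Fin d) → Fin (nv r) → ℂ) (r : Fin d) :
    Polynomial ℂ :=
  ∑ j : Fin (nv r), Polynomial.C (A r j * (1 / ((j : ℕ).factorial : ℂ)))
    * Polynomial.X ^ (j : ℕ)


/-! ### Auxiliary lemmas for the uniqueness proof -/

/-- The derivative as an endomorphism of `ℂ[t]`. -/
def Dend : Module.End ℂ (Polynomial ℂ) := Polynomial.derivative

lemma shiftedDeriv_eq_aeval (c : ℂ) : shiftedDeriv c = Polynomial.aeval Dend (X + C c) := by
  simp [shiftedDeriv, Dend, Module.algebraMap_end_eq_smul_id]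
  rfl

lemma opProd_eq_aeval {d : ℕ} (mr : Fin d → ℤ) (nv : Fin d → ℕ) (m : ℤ) :
    opProd mr nv m = Polynomial.aeval Dend
      (∏ r : Fin d, (X + C (Complex.I * ((m : ℂ) - (mr r : ℂ)))) ^ nv r) := by
  rw [opProd, ← Fin.prod_ofFn, map_list_prod, List.map_ofFn]
  congr 1
  refine congrArg List.ofFn (funext fun r => ?_)
  show _ = Polynomial.aeval Dend ((X + C (Complex.I * ((m : ℂ) - (mr r : ℂ)))) ^ nv r)
  rw [map_pow, shiftedDeriv_eq_aeval]

lemma aeval_Dend_injective {Q : Polynomial ℂ} (hQ : Q.coeff 0 ≠ 0) :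
    Function.Injective (Polynomial.aeval Dend Q) := by
  have key : ∀ g : Polynomial ℂ, Polynomial.aeval Dend Q g = 0 → g = 0 := by
    intro g hg
    by_contra hgne
    have h1 : Polynomial.aeval Dend Q g
        = ∑ i ∈ Finset.range (Q.natDegree + 1), Q.coeff i • (⇑derivative)^[i] g := by
      rw [Polynomial.aeval_eq_sum_range, LinearMap.sum_apply]
      refine Finset.sum_congr rfl fun i _ => ?_
      rw [LinearMap.smul_apply, Module.End.pow_apply]
      rfl
    have h2 : (Polynomial.aeval Dend Q g).coeff g.natDegree = Q.coeff 0 * g.leadingCoeff := by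
      rw [h1, Polynomial.finset_sum_coeff]
      rw [Finset.sum_eq_single_of_mem 0 (Finset.mem_range.mpr (Nat.succ_pos _))]
      · simp only [Function.iterate_zero, id_eq, Polynomial.coeff_smul, smul_eq_mul,
          Polynomial.leadingCoeff]
      · intro i _ hi
        obtain ⟨j, rfl⟩ : ∃ j, i = j + 1 := ⟨i - 1, by omega⟩
        rw [Polynomial.coeff_smul]
        have hdeg : ((⇑derivative)^[j] g).natDegree < g.natDegree + 1 :=
          Nat.lt_succ_of_le ((Polynomial.natDegree_iterate_derivative g j).trans (Nat.sub_le _ _))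
        rw [show j + 1 = 1 + j by omega, Function.iterate_add_apply,
          Function.iterate_one, Polynomial.coeff_derivative,
          Polynomial.coeff_eq_zero_of_natDegree_lt hdeg, zero_mul, smul_zero]
    rw [hg, Polynomial.coeff_zero] at h2
    exact (mul_ne_zero hQ (Polynomial.leadingCoeff_ne_zero.mpr hgne)) h2.symm
  intro a b hab
  have : Polynomial.aeval Dend Q (a - b) = 0 := by rw [map_sub, hab, sub_self]
  exact sub_eq_zero.mp (key _ this)

lemma zero_of_iterate_derivative (n : ℕ) (g : Polynomial ℂ) (s : ℂ)
    (h1 : (⇑derivative)^[n] g = 0)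
    (h2 : ∀ j < n, ((⇑derivative)^[j] g).eval s = 0) : g = 0 := by
  have hall : ∀ j : ℕ, (((⇑derivative)^[j]) g).eval s = 0 := by
    intro j
    by_cases hj : j < n
    · exact h2 j hj
    · push_neg at hj
      obtain ⟨i, rfl⟩ := Nat.exists_eq_add_of_le hj
      rw [Nat.add_comm, Function.iterate_add_apply, h1]
      simp [Polynomial.iterate_derivative_zero]
  have ht : Polynomial.taylor s g = 0 := by
    ext j
    rw [Polynomial.taylor_coeff, Polynomial.coeff_zero]
    have hf := congrFun (Polynomial.factorial_smul_hasseDeriv (R := ℂ) j) g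
    have hz : (j.factorial : ℂ) * (Polynomial.hasseDeriv j g).eval s = 0 := by
      calc (j.factorial : ℂ) * (Polynomial.hasseDeriv j g).eval s
          = ((j.factorial • Polynomial.hasseDeriv j) g).eval s := by
            simp [LinearMap.smul_apply, nsmul_eq_mul]
        _ = 0 := by rw [hf]; exact hall j
    exact (mul_eq_zero.mp hz).resolve_left (Nat.cast_ne_zero.mpr j.factorial_ne_zero)
  exact Polynomial.taylor_injective s (ht.trans (map_zero _).symm)

lemma mode_kernel_zero {d : ℕ} (mr : Fin d → ℤ) (hmr : Function.Injective mr)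
    (nv : Fin d → ℕ) (m : ℤ) (s : ℂ) (g : Polynomial ℂ) (h0 : opProd mr nv m g = 0)
    (hres : ∀ r : Fin d, mr r = m → ∀ j < nv r, ((⇑derivative)^[j] g).eval s = 0) :
    g = 0 := by
  rw [opProd_eq_aeval] at h0
  by_cases hm : ∃ r, mr r = m
  · obtain ⟨r0, hr0⟩ := hm
    rw [← Finset.mul_prod_erase _ _ (Finset.mem_univ r0)] at h0
    have hc0 : Complex.I * ((m : ℂ) - (mr r0 : ℂ)) = 0 := by rw [hr0]; ring
    rw [hc0, map_zero, add_zero, mul_comm, map_mul, Module.End.mul_apply] at h0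
    have hXn : (Polynomial.aeval Dend ((X : Polynomial ℂ) ^ nv r0)) g
        = (⇑derivative)^[nv r0] g := by
      rw [Polynomial.aeval_X_pow, Module.End.pow_apply]; rfl
    rw [hXn] at h0
    set Q := ∏ r ∈ Finset.univ.erase r0,
      (X + C (Complex.I * ((m : ℂ) - (mr r : ℂ)))) ^ nv r with hQdef
    have hQ : Q.coeff 0 ≠ 0 := by
      rw [Polynomial.coeff_zero_eq_eval_zero, hQdef, Polynomial.eval_prod]
      refine Finset.prod_ne_zero_iff.mpr fun r hr => ?_
      simp only [Polynomial.eval_pow, Polynomial.eval_add, Polynomial.eval_X, Polynomial.eval_C,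
        zero_add]
      refine pow_ne_zero _ (mul_ne_zero Complex.I_ne_zero (sub_ne_zero.mpr ?_))
      have hrne : r ≠ r0 := (Finset.mem_erase.mp hr).1
      intro hc
      have hmm : m = mr r := by exact_mod_cast hc
      exact hrne ((hmr (hr0.trans hmm)).symm)
    have hdn : (⇑derivative)^[nv r0] g = 0 :=
      aeval_Dend_injective hQ (h0.trans (map_zero _).symm)
    exact zero_of_iterate_derivative (nv r0) g s hdn (hres r0 hr0)
  · push_neg at hm
    have hP : (∏ r : Fin d, (X + C (Complex.I * ((m : ℂ) - (mr r : ℂ)))) ^ nv r).coeff 0 ≠ 0 := by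
      rw [Polynomial.coeff_zero_eq_eval_zero, Polynomial.eval_prod]
      refine Finset.prod_ne_zero_iff.mpr fun r _ => ?_
      simp only [Polynomial.eval_pow, Polynomial.eval_add, Polynomial.eval_X, Polynomial.eval_C,
        zero_add]
      refine pow_ne_zero _ (mul_ne_zero Complex.I_ne_zero (sub_ne_zero.mpr ?_))
      exact fun hc => hm r (by exact_mod_cast hc.symm)
    exact aeval_Dend_injective hP (h0.trans (map_zero _).symm)

lemma coeff_seriesDeriv_iterate (l : ℕ) (x : FSeries) (j : ℕ) :
    PowerSeries.coeff j (seriesDeriv^[l] x)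
      = modeDeriv^[l] (PowerSeries.coeff j x) := by
  induction l generalizing x with
  | zero => simp
  | succ l ih =>
    have hc : PowerSeries.coeff j (seriesDeriv x)
        = modeDeriv (PowerSeries.coeff j x) := PowerSeries.coeff_mk _ _
    rw [Function.iterate_succ_apply, ih, hc, ← Function.iterate_succ_apply]

lemma VEval_congr {n : ℕ} (V : MvPolynomial (Fin n) (Polynomial (AddMonoidAlgebra ℂ ℤ)))
    (y y' : Fin n → FSeries) (k : ℕ)
    (h : ∀ (l : Fin n) (j : ℕ), j < k →
      PowerSeries.coeff j (y l) = PowerSeries.coeff j (y' l)) :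
    ∀ j < k, PowerSeries.coeff j (VEval V y)
      = PowerSeries.coeff j (VEval V y') := by
  set I : Ideal FSeries := Ideal.span {(PowerSeries.X : FSeries) ^ k} with hI
  have key : VEval V y - VEval V y' ∈ I := by
    rw [← Ideal.Quotient.eq]
    show (Ideal.Quotient.mk I) (MvPolynomial.eval₂ _ y V)
      = (Ideal.Quotient.mk I) (MvPolynomial.eval₂ _ y' V)
    rw [MvPolynomial.eval₂_comp_left (S₁ := FSeries) (S₂ := FSeries ⧸ I) (k := Ideal.Quotient.mk I),
      MvPolynomial.eval₂_comp_left (S₁ := FSeries) (S₂ := FSeries ⧸ I) (k := Ideal.Quotient.mk I)]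
    congr 1
    funext l
    simp only [Function.comp_apply]
    rw [Ideal.Quotient.eq, hI, Ideal.mem_span_singleton]
    rw [PowerSeries.X_pow_dvd_iff]
    intro j hj
    rw [map_sub, h l j hj, sub_self]
  intro j hj
  have hd := Ideal.mem_span_singleton.mp key
  have hz := PowerSeries.X_pow_dvd_iff.mp hd j hj
  rw [map_sub] at hz
  exact sub_eq_zero.mp hz

/-- uniqueness of the naive perturbative solution, scalar `N`-th order case:
two scalar formal solutions of `Π_r (d/dt - i m_r)^{n_r} y = ε V(ε,e^{±it},y,…,y^{(N-1)})`
whose `ε⁰` parts both equal the unperturbed solution `Σ_r δ_{m,m_r} h_r(t,A_r)` and whose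
derivatives `d^{j-1}/dt^{j-1}` of the resonant coefficients agree at `t = s` for all
`(r,j) ∈ 𝓘` coincide. -/
theorem scalar_uniqueness {d : ℕ} (hd : 0 < d) (mr : Fin d → ℤ)
    (hmr : Function.Injective mr) (nv : Fin d → ℕ) (hnv : ∀ r, 0 < nv r)
    (V : MvPolynomial (Fin (∑ r, nv r)) (Polynomial (AddMonoidAlgebra ℂ ℤ)))
    (s : ℂ) (A : (r : Fin d) → Fin (nv r) → ℂ)
    (F F' : ℕ → FourierPoly)
    (hsol : IsScalarFormalSolution mr nv V F) (hsol' : IsScalarFormalSolution mr nv V F')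
    (hinit : F 0 = ∑ r : Fin d, AddMonoidAlgebra.single (mr r) (hPoly nv A r))
    (hinit' : F' 0 = ∑ r : Fin d, AddMonoidAlgebra.single (mr r) (hPoly nv A r))
    (hres : ∀ (r : Fin d) (j : Fin (nv r)) (k : ℕ),
      ((fun p => derivative p)^[(j : ℕ)] ((F k).coeff (mr r))).eval s
        = ((fun p => derivative p)^[(j : ℕ)] ((F' k).coeff (mr r))).eval s) :
    F = F' := by
  funext k
  induction k using Nat.strong_induction_on with
  | _ k IH =>
    have hy : ∀ (l : Fin (∑ r, nv r)) (j : ℕ), j < k →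
        PowerSeries.coeff j (seriesDeriv^[(l : ℕ)] (PowerSeries.mk fun k' => F k'))
          = PowerSeries.coeff j
              (seriesDeriv^[(l : ℕ)] (PowerSeries.mk fun k' => F' k')) := by
      intro l j hj
      rw [coeff_seriesDeriv_iterate, coeff_seriesDeriv_iterate,
        PowerSeries.coeff_mk, PowerSeries.coeff_mk, IH j hj]
    have hRHS : PowerSeries.coeff k (PowerSeries.X *
          VEval V (fun l => seriesDeriv^[(l : ℕ)] (PowerSeries.mk fun k' => F k')))
        = PowerSeries.coeff k (PowerSeries.X *
          VEval V (fun l => seriesDeriv^[(l : ℕ)] (PowerSeries.mk fun k' => F' k'))) := by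
      cases k with
      | zero =>
        rw [PowerSeries.coeff_zero_eq_constantCoeff, map_mul, map_mul,
          PowerSeries.constantCoeff_X, zero_mul, zero_mul]
      | succ k' =>
        rw [PowerSeries.coeff_succ_X_mul, PowerSeries.coeff_succ_X_mul]
        exact VEval_congr V _ _ (k' + 1) (fun l j hj => hy l j hj) k' (Nat.lt_succ_self k')
    refine AddMonoidAlgebra.coeff_injective (Finsupp.ext fun m => ?_)
    have h0 : opProd mr nv m ((F k).coeff m - (F' k).coeff m) = 0 := by
      rw [map_sub, hsol k m, hsol' k m, hRHS, sub_self]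
    have hres0 : ∀ r : Fin d, mr r = m →
        ∀ j < nv r, ((⇑derivative)^[j] ((F k).coeff m - (F' k).coeff m)).eval s = 0 := by
      intro r hr j hj
      subst hr
      rw [Polynomial.iterate_derivative_sub, Polynomial.eval_sub]
      exact sub_eq_zero_of_eq (hres r ⟨j, hj⟩ k)
    exact sub_eq_zero.mp (mode_kernel_zero mr hmr nv m s _ h0 hres0)

end
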